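/- Let G be a group of nilpotency class 2 with elements x_0,...,x_{n-1}, and let α, β be n-tuples of integers. Writing ᾱ = ∏_{i<n} x_i^{α_i} and β̄ = ∏_{i<n} x_i^{β_i}, for any central elements c, d one has [ᾱc, β̄d] = ∏_{r<s<n} [x_r, x_s]^{α_r β_s − α_s β_r}. -/

import Mathlib

open scoped IsMulCommutative

section Aux

variable {G : Type*} [Group G]

/-- auxiliary commutator -/
def cmt (a b : G) : G := a⁻¹ * b⁻¹ * a * b

variable (hnil : ∀ x y : G, x⁻¹ * y⁻¹ * x * y ∈ Subgroup.center G)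
include hnil

lemma cmt_mem (a b : G) : cmt a b ∈ Subgroup.center G := hnil a b

lemma cmt_comm_all (a b g : G) : g * cmt a b = cmt a b * g :=
  Subgroup.mem_center_iff.mp (cmt_mem hnil a b) g

omit hnil in
lemma cmt_one_left (b : G) : cmt (1 : G) b = 1 := by unfold cmt; group

omit hnil in
lemma cmt_one_right (a : G) : cmt a (1 : G) = 1 := by unfold cmt; group

omit hnil in
lemma cmt_self (a : G) : cmt a a = 1 := by unfold cmt; group

omit hnil in
lemma cmt_symm (a b : G) : cmt b a = (cmt a b)⁻¹ := by unfold cmt; group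

lemma cmt_mul_left (a b c : G) : cmt (a * b) c = cmt a c * cmt b c := by
  calc cmt (a * b) c = (b⁻¹ * cmt a c) * (c⁻¹ * (b * c)) := by unfold cmt; group
    _ = (cmt a c * b⁻¹) * (c⁻¹ * (b * c)) := by rw [cmt_comm_all hnil]
    _ = cmt a c * cmt b c := by unfold cmt; group

lemma cmt_mul_right (a b c : G) : cmt a (b * c) = cmt a c * cmt a b := by
  calc cmt a (b * c) = a⁻¹ * c⁻¹ * (b⁻¹ * a * b) * c := by unfold cmt; group
    _ = a⁻¹ * c⁻¹ * (a * cmt a b) * c := by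
        rw [show b⁻¹ * a * b = a * cmt a b from by unfold cmt; group]
    _ = (a⁻¹ * c⁻¹ * a) * (cmt a b * c) := by group
    _ = (a⁻¹ * c⁻¹ * a) * (c * cmt a b) := by rw [cmt_comm_all hnil]
    _ = cmt a c * cmt a b := by unfold cmt; group

lemma cmt_inv_left (a b : G) : cmt a⁻¹ b = (cmt a b)⁻¹ := by
  have h := cmt_mul_left hnil a⁻¹ a b
  rw [inv_mul_cancel, cmt_one_left] at h
  exact eq_inv_of_mul_eq_one_left h.symm

lemma cmt_inv_right (a b : G) : cmt a b⁻¹ = (cmt a b)⁻¹ := by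
  have h := cmt_mul_right hnil a b⁻¹ b
  rw [inv_mul_cancel, cmt_one_right] at h
  exact eq_inv_of_mul_eq_one_right h.symm

lemma cmt_zpow_right (a b : G) (k : ℤ) : cmt a (b ^ k) = cmt a b ^ k := by
  induction k using Int.induction_on with
  | zero => simp [cmt_one_right]
  | succ k ih =>
      rw [zpow_add_one, cmt_mul_right hnil, ih, ← zpow_one_add]
      congr 1; omega
  | pred k ih =>
      rw [zpow_sub_one, cmt_mul_right hnil, cmt_inv_right hnil, ih, ← zpow_neg_one,
        ← zpow_add]
      congr 1; omega

lemma cmt_zpow_left (a b : G) (m : ℤ) : cmt (a ^ m) b = cmt a b ^ m := by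
  induction m using Int.induction_on with
  | zero => simp [cmt_one_left]
  | succ k ih => rw [zpow_add_one, cmt_mul_left hnil, ih, ← zpow_add_one]
  | pred k ih =>
      rw [zpow_sub_one, cmt_mul_left hnil, ih, cmt_inv_left hnil, ← zpow_sub_one]

lemma cmt_zpow_zpow (a b : G) (m k : ℤ) :
    cmt (a ^ m) (b ^ k) = cmt a b ^ (m * k) := by
  rw [cmt_zpow_right hnil, cmt_zpow_left hnil, ← zpow_mul]

lemma cmt_strip_left (a b z : G) (hz : z ∈ Subgroup.center G) :
    cmt (a * z) b = cmt a b := by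
  have hcz := Subgroup.mem_center_iff.mp hz
  calc cmt (a * z) b = z⁻¹ * ((a⁻¹ * b⁻¹ * a) * (z * b)) := by unfold cmt; group
    _ = z⁻¹ * ((a⁻¹ * b⁻¹ * a) * (b * z)) := by rw [← hcz b]
    _ = z⁻¹ * ((a⁻¹ * b⁻¹ * a * b) * z) := by group
    _ = z⁻¹ * (z * (a⁻¹ * b⁻¹ * a * b)) := by rw [hcz]
    _ = cmt a b := by unfold cmt; group

lemma cmt_strip_right (a b z : G) (hz : z ∈ Subgroup.center G) :
    cmt a (b * z) = cmt a b := by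
  have hcz := Subgroup.mem_center_iff.mp (inv_mem hz : z⁻¹ ∈ Subgroup.center G)
  calc cmt a (b * z) = a⁻¹ * (z⁻¹ * (b⁻¹ * a * b)) * z := by unfold cmt; group
    _ = a⁻¹ * ((b⁻¹ * a * b) * z⁻¹) * z := by rw [← hcz (b⁻¹ * a * b)]
    _ = cmt a b := by unfold cmt; group

lemma cmt_list_left (l : List G) (b : G) :
    cmt l.prod b = (l.map (fun a => cmt a b)).prod := by
  induction l with
  | nil => simp [cmt_one_left]
  | cons h t ih =>
      rw [List.prod_cons, List.map_cons, List.prod_cons, cmt_mul_left hnil, ih]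

lemma cmt_list_right (a : G) (l : List G) :
    cmt a l.prod = (l.map (fun b => cmt a b)).prod := by
  induction l with
  | nil => simp [cmt_one_right]
  | cons h t ih =>
      simp only [List.prod_cons, List.map_cons, cmt_mul_right hnil, ih]
      exact cmt_comm_all hnil a h _

/-- lift a list product of central elements to the center -/
lemma lift_prod {n : ℕ} (f : Fin n → Subgroup.center G) :
    (List.ofFn fun i => ((f i : G))).prod = ((∏ i, f i : Subgroup.center G) : G) := by
  rw [show (List.ofFn fun i => ((f i : G))) = (List.ofFn f).map (Subgroup.center G).subtype
      from (List.map_ofFn).symm]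
  rw [List.prod_hom, List.prod_ofFn]
  rfl

end Aux

/-- combinatorial lemma in a commutative group -/
lemma comb {M : Type*} [CommGroup M] {n : ℕ} (f : Fin n → Fin n → M)
    (hdiag : ∀ i, f i i = 1) :
    ∏ i, ∏ j, f i j = ∏ i, ∏ j, (if i < j then f i j * f j i else 1) := by
  have key : ∀ i j : Fin n, f i j
      = (if i < j then f i j else 1) * (if j < i then f i j else 1) := by
    intro i j
    rcases lt_trichotomy i j with h | h | h
    · simp [h, asymm h]
    · subst h; simp [lt_irrefl, hdiag]
    · simp [h, asymm h]
  calc ∏ i, ∏ j, f i j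
      = ∏ i, ∏ j, ((if i < j then f i j else 1) * (if j < i then f i j else 1)) :=
        Finset.prod_congr rfl fun i _ => Finset.prod_congr rfl fun j _ => key i j
    _ = (∏ i, ∏ j, (if i < j then f i j else 1)) *
        (∏ i, ∏ j, (if j < i then f i j else 1)) := by
        rw [← Finset.prod_mul_distrib]
        exact Finset.prod_congr rfl fun i _ => Finset.prod_mul_distrib
    _ = (∏ i, ∏ j, (if i < j then f i j else 1)) *
        (∏ i, ∏ j, (if i < j then f j i else 1)) := by
        congr 1
        exact Finset.prod_comm
    _ = ∏ i, ∏ j, (if i < j then f i j * f j i else 1) := by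
        rw [← Finset.prod_mul_distrib]
        refine Finset.prod_congr rfl fun i _ => ?_
        rw [← Finset.prod_mul_distrib]
        refine Finset.prod_congr rfl fun j _ => ?_
        split <;> simp

/-- In a group of nilpotency class 2, with `ᾱ = ∏_{i<n} x_i^{α_i}` and
`β̄ = ∏_{i<n} x_i^{β_i}` (products in order of increasing index) and central
elements `c, d`, one has `[ᾱc, β̄d] = ∏_{r<s<n} [x_r, x_s]^{α_r β_s − α_s β_r}`. -/
theorem stmt2 {G : Type*} [Group G]
    (hnil : ∀ x y : G, x⁻¹ * y⁻¹ * x * y ∈ Subgroup.center G)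
    (n : ℕ) (x : Fin n → G) (α β : Fin n → ℤ) (c d : G)
    (hc : c ∈ Subgroup.center G) (hd : d ∈ Subgroup.center G) :
    ((List.ofFn fun i => x i ^ α i).prod * c)⁻¹ *
      ((List.ofFn fun i => x i ^ β i).prod * d)⁻¹ *
      ((List.ofFn fun i => x i ^ α i).prod * c) *
      ((List.ofFn fun i => x i ^ β i).prod * d)
    = (List.ofFn fun r : Fin n => (List.ofFn fun s : Fin n =>
        if r < s then ((x r)⁻¹ * (x s)⁻¹ * x r * x s) ^ (α r * β s - α s * β r)
        else 1).prod).prod := by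
  set A := (List.ofFn fun i => x i ^ α i).prod with hA'
  set B := (List.ofFn fun i => x i ^ β i).prod with hB'
  set k : Fin n → Fin n → Subgroup.center G :=
    fun r s => ⟨cmt (x r) (x s), hnil _ _⟩ with hk
  show cmt (A * c) (B * d) = _
  rw [cmt_strip_left hnil _ _ _ hc, cmt_strip_right hnil _ _ _ hd]
  have step1 : cmt A B = (List.ofFn fun r : Fin n => cmt (x r ^ α r) B).prod := by
    rw [hA', cmt_list_left hnil, List.map_ofFn]
    rfl
  have step2 : ∀ r : Fin n, cmt (x r ^ α r) B
      = (List.ofFn fun s : Fin n => cmt (x r) (x s) ^ (α r * β s)).prod := by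
    intro r
    rw [hB', cmt_list_right hnil, List.map_ofFn]
    exact congrArg List.prod (congrArg List.ofFn
      (funext fun s => cmt_zpow_zpow hnil (x r) (x s) (α r) (β s)))
  have inner : ∀ r : Fin n, cmt (x r ^ α r) B
      = (((∏ s, k r s ^ (α r * β s)) : Subgroup.center G) : G) := by
    intro r
    rw [step2 r, ← lift_prod hnil (fun s => k r s ^ (α r * β s))]
    exact congrArg List.prod (congrArg List.ofFn (funext fun s => by simp [hk]))
  have lhs_eq : cmt A B
      = (((∏ r, ∏ s, k r s ^ (α r * β s)) : Subgroup.center G) : G) := by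
    rw [step1, ← lift_prod hnil (fun r => ∏ s, k r s ^ (α r * β s))]
    exact congrArg List.prod (congrArg List.ofFn (funext fun r => inner r))
  have rhs_inner : ∀ r : Fin n,
      (List.ofFn fun s : Fin n =>
        if r < s then ((x r)⁻¹ * (x s)⁻¹ * x r * x s) ^ (α r * β s - α s * β r)
        else 1).prod
      = (((∏ s, if r < s then k r s ^ (α r * β s - α s * β r) else 1) :
          Subgroup.center G) : G) := by
    intro r
    rw [← lift_prod hnil (fun s => if r < s then k r s ^ (α r * β s - α s * β r) else 1)]
    refine congrArg List.prod (congrArg List.ofFn (funext fun s => ?_))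
    by_cases h : r < s
    · simp only [if_pos h, hk]
      rfl
    · simp [if_neg h]
  have rhs_eq : (List.ofFn fun r : Fin n => (List.ofFn fun s : Fin n =>
        if r < s then ((x r)⁻¹ * (x s)⁻¹ * x r * x s) ^ (α r * β s - α s * β r)
        else 1).prod).prod
      = (((∏ r, ∏ s, if r < s then k r s ^ (α r * β s - α s * β r) else 1) :
          Subgroup.center G) : G) := by
    rw [← lift_prod hnil (fun r => ∏ s, if r < s then k r s ^ (α r * β s - α s * β r) else 1)]
    exact congrArg List.prod (congrArg List.ofFn (funext fun r => rhs_inner r))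
  rw [lhs_eq, rhs_eq]
  congr 1
  have hdiag : ∀ i : Fin n, k i i ^ (α i * β i) = (1 : Subgroup.center G) := by
    intro i
    have h1 : k i i = 1 := Subtype.ext (cmt_self (x i))
    rw [h1, one_zpow]
  have hsymm : ∀ r s : Fin n, k s r = (k r s)⁻¹ := by
    intro r s
    exact Subtype.ext (cmt_symm (x r) (x s))
  calc ∏ r, ∏ s, k r s ^ (α r * β s)
      = ∏ r, ∏ s, (if r < s then k r s ^ (α r * β s) * k s r ^ (α s * β r) else 1) :=
        comb (fun r s => k r s ^ (α r * β s)) hdiag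
    _ = ∏ r, ∏ s, (if r < s then k r s ^ (α r * β s - α s * β r) else 1) := by
        refine Finset.prod_congr rfl fun r _ => Finset.prod_congr rfl fun s _ => ?_
        by_cases h : r < s
        · rw [if_pos h, if_pos h, hsymm r s, inv_zpow, ← zpow_sub]
        · rw [if_neg h, if_neg h]
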